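/- For a symmetric real matrix M with spectral decomposition M = Σ_θ θ E_θ over distinct eigenvalues θ, two indices a and b are cospectral (i.e. char(M\a) = char(M\b)) if and only if (E_θ)_{a,a} = (E_θ)_{b,b} for every eigenvalue θ. -/

import Mathlib

open Matrix Polynomial

noncomputable def Mdel {n : ℕ} (M : Matrix (Fin n) (Fin n) ℝ) (a : Fin n) :
    Matrix {i : Fin n // i ≠ a} {i : Fin n // i ≠ a} ℝ :=
  M.submatrix Subtype.val Subtype.val


lemma evalcp {m : Type*} [Fintype m] [DecidableEq m] (A : Matrix m m ℝ) (x : ℝ) :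
    A.charpoly.eval x = (x • (1 : Matrix m m ℝ) - A).det := by
  rw [Matrix.charpoly, _root_.eval_det, matPolyEquiv_charmatrix]
  congr 1
  rw [Polynomial.eval_sub, Polynomial.eval_X, Polynomial.eval_C]
  congr 1
  ext i j
  simp [Matrix.scalar_apply, Matrix.smul_apply, Matrix.one_apply, Matrix.diagonal_apply]

lemma Mdel_charpoly {m : ℕ} (M : Matrix (Fin (m+1)) (Fin (m+1)) ℝ) (a : Fin (m+1)) :
    (Mdel M a).charpoly = (M.submatrix a.succAbove a.succAbove).charpoly := by
  rw [← Matrix.charpoly_reindex (finSuccAboveEquiv a)]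
  congr 1
  ext ⟨i, hi⟩ ⟨j, hj⟩
  have h1 : a.succAbove ((finSuccAboveEquiv a).symm ⟨i, hi⟩) = i := by
    have := (finSuccAboveEquiv a).apply_symm_apply ⟨i, hi⟩
    rw [finSuccAboveEquiv_apply] at this
    exact congrArg Subtype.val this
  have h2 : a.succAbove ((finSuccAboveEquiv a).symm ⟨j, hj⟩) = j := by
    have := (finSuccAboveEquiv a).apply_symm_apply ⟨j, hj⟩
    rw [finSuccAboveEquiv_apply] at this
    exact congrArg Subtype.val this
  simp [Mdel, Matrix.reindex_apply, Matrix.submatrix_apply, h1, h2]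

lemma key {m : ℕ} (M : Matrix (Fin (m+1)) (Fin (m+1)) ℝ)
    (Θ : Finset ℝ) (E : ℝ → Matrix (Fin (m+1)) (Fin (m+1)) ℝ)
    (hdecomp : M = ∑ θ ∈ Θ, θ • E θ)
    (hsum : ∑ θ ∈ Θ, E θ = 1)
    (hidem : ∀ θ ∈ Θ, E θ * E θ = E θ)
    (horth : ∀ θ ∈ Θ, ∀ η ∈ Θ, θ ≠ η → E θ * E η = 0)
    (a : Fin (m+1)) (x : ℝ) (hx : ∀ θ ∈ Θ, x ≠ θ) :
    ((Mdel M a).charpoly).eval x =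
      (x • (1 : Matrix (Fin (m+1)) (Fin (m+1)) ℝ) - M).det *
        ∑ θ ∈ Θ, (x - θ)⁻¹ * E θ a a := by
  set A : Matrix (Fin (m+1)) (Fin (m+1)) ℝ := x • 1 - M with hAdef
  set N : Matrix (Fin (m+1)) (Fin (m+1)) ℝ := ∑ θ ∈ Θ, (x - θ)⁻¹ • E θ with hNdef
  have hA : A = ∑ θ ∈ Θ, (x - θ) • E θ := by
    rw [hAdef, hdecomp]
    simp only [sub_smul]
    rw [Finset.sum_sub_distrib, ← Finset.smul_sum, hsum]
  have hAN : A * N = 1 := by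
    rw [hA, hNdef, Finset.sum_mul_sum]
    have : ∀ θ ∈ Θ, ∑ η ∈ Θ, ((x - θ) • E θ) * ((x - η)⁻¹ • E η) = E θ := by
      intro θ hθ
      rw [Finset.sum_eq_single θ]
      · rw [smul_mul_assoc, mul_smul_comm, smul_smul, hidem θ hθ,
          mul_inv_cancel₀ (sub_ne_zero.mpr (hx θ hθ)), one_smul]
      · intro η hη hne
        rw [smul_mul_assoc, mul_smul_comm, smul_smul, horth θ hθ η hη (fun h => hne h.symm),
          smul_zero]
      · intro h; exact absurd hθ h
    calc ∑ θ ∈ Θ, ∑ η ∈ Θ, ((x - θ) • E θ) * ((x - η)⁻¹ • E η)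
        = ∑ θ ∈ Θ, E θ := Finset.sum_congr rfl this
      _ = 1 := hsum
  have hNA : N * A = 1 := mul_eq_one_comm.mp hAN
  have hadj : A.adjugate = A.det • N := by
    calc A.adjugate = (N * A) * A.adjugate := by rw [hNA, Matrix.one_mul]
      _ = N * (A * A.adjugate) := by rw [Matrix.mul_assoc]
      _ = N * (A.det • 1) := by rw [Matrix.mul_adjugate]
      _ = A.det • N := by rw [mul_smul_comm, Matrix.mul_one]
  have hcof : ((Mdel M a).charpoly).eval x = A.adjugate a a := by
    rw [Mdel_charpoly, evalcp, Matrix.adjugate_fin_succ_eq_det_submatrix]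
    have hev : ((-1 : ℝ)) ^ ((a : ℕ) + (a : ℕ)) = 1 := Even.neg_one_pow ⟨a, rfl⟩
    rw [hev, one_mul]
    congr 1
    rw [hAdef]
    ext i j
    simp [Matrix.submatrix_apply, Matrix.one_apply, Fin.succAbove_right_injective.eq_iff]
  rw [hcof, hadj]
  simp only [Matrix.smul_apply, hNdef, Matrix.sum_apply, smul_eq_mul]

/-- For a real symmetric matrix with spectral decomposition `M = ∑ θ ∈ Θ, θ • E θ`
(`E θ` the orthogonal projections onto the eigenspaces, summing to the identity),
indices `a` and `b` are cospectral iff `(E θ) a a = (E θ) b b` for every eigenvalue `θ`. -/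
theorem cospectral_iff_diag_spectral_idempotents {n : ℕ}
    (M : Matrix (Fin n) (Fin n) ℝ) (hM : M.IsSymm)
    (Θ : Finset ℝ) (E : ℝ → Matrix (Fin n) (Fin n) ℝ)
    (hdecomp : M = ∑ θ ∈ Θ, θ • E θ)
    (hsum : ∑ θ ∈ Θ, E θ = 1)
    (hsymm : ∀ θ ∈ Θ, (E θ).IsSymm)
    (hidem : ∀ θ ∈ Θ, E θ * E θ = E θ)
    (horth : ∀ θ ∈ Θ, ∀ η ∈ Θ, θ ≠ η → E θ * E η = 0)
    (hne : ∀ θ ∈ Θ, E θ ≠ 0)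
    (a b : Fin n) :
    (Mdel M a).charpoly = (Mdel M b).charpoly ↔
      ∀ θ ∈ Θ, E θ a a = E θ b b := by
  obtain ⟨m, rfl⟩ : ∃ m, n = m + 1 := ⟨n - 1, by have := a.pos; omega⟩
  constructor
  · intro h θ₀ hθ₀
    have hPQ :
        (∑ θ ∈ Θ, C (E θ a a) * ∏ η ∈ Θ.erase θ, (X - C η)) =
        (∑ θ ∈ Θ, C (E θ b b) * ∏ η ∈ Θ.erase θ, (X - C η)) := by
      apply Polynomial.eq_of_infinite_eval_eq
      have hfin : ({x : ℝ | M.charpoly.IsRoot x} ∪ ↑Θ).Finite :=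
        (Polynomial.finite_setOf_isRoot (M.charpoly_monic.ne_zero)).union Θ.finite_toSet
      apply Set.Infinite.mono _ hfin.infinite_compl
      intro x hx
      simp only [Set.mem_compl_iff, Set.mem_union, Set.mem_setOf_eq, not_or] at hx
      obtain ⟨hroot, hΘ⟩ := hx
      have hxθ : ∀ θ ∈ Θ, x ≠ θ := fun θ hθ hxe => hΘ (hxe ▸ hθ)
      have hdet : (x • (1 : Matrix (Fin (m+1)) (Fin (m+1)) ℝ) - M).det ≠ 0 := by
        rw [← evalcp]; exact hroot
      have h1 := key M Θ E hdecomp hsum hidem horth a x hxθ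
      have h2 := key M Θ E hdecomp hsum hidem horth b x hxθ
      have h3 : ∑ θ ∈ Θ, (x - θ)⁻¹ * E θ a a = ∑ θ ∈ Θ, (x - θ)⁻¹ * E θ b b :=
        mul_left_cancel₀ hdet (by rw [← h1, ← h2, h])
      have hP : ∀ c : Fin (m + 1),
          Polynomial.eval x (∑ θ ∈ Θ, C (E θ c c) * ∏ η ∈ Θ.erase θ, (X - C η)) =
            (∑ θ ∈ Θ, (x - θ)⁻¹ * E θ c c) * ∏ η ∈ Θ, (x - η) := by
        intro c
        rw [Finset.sum_mul, Polynomial.eval_finset_sum]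
        apply Finset.sum_congr rfl
        intro θ hθ
        rw [Polynomial.eval_mul, Polynomial.eval_C, Polynomial.eval_prod]
        simp only [Polynomial.eval_sub, Polynomial.eval_X, Polynomial.eval_C]
        rw [← Finset.mul_prod_erase Θ _ hθ]
        rw [show (x - θ)⁻¹ * E θ c c * ((x - θ) * ∏ η ∈ Θ.erase θ, (x - η)) =
            ((x - θ)⁻¹ * (x - θ)) * (E θ c c * ∏ η ∈ Θ.erase θ, (x - η)) by ring,
          inv_mul_cancel₀ (sub_ne_zero.mpr (hxθ θ hθ)), one_mul]
      show Polynomial.eval x _ = Polynomial.eval x _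
      rw [hP a, hP b, h3]
    have hev := congrArg (Polynomial.eval θ₀) hPQ
    have heval : ∀ c : Fin (m + 1),
        Polynomial.eval θ₀ (∑ θ ∈ Θ, C (E θ c c) * ∏ η ∈ Θ.erase θ, (X - C η)) =
          E θ₀ c c * ∏ η ∈ Θ.erase θ₀, (θ₀ - η) := by
      intro c
      rw [Polynomial.eval_finset_sum]
      rw [Finset.sum_eq_single θ₀]
      · rw [Polynomial.eval_mul, Polynomial.eval_C, Polynomial.eval_prod]
        simp only [Polynomial.eval_sub, Polynomial.eval_X, Polynomial.eval_C]
      · intro θ hθ hneθ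
        rw [Polynomial.eval_mul, Polynomial.eval_C, Polynomial.eval_prod]
        rw [Finset.prod_eq_zero (Finset.mem_erase.mpr ⟨fun hh => hneθ hh.symm, hθ₀⟩)]
        · rw [mul_zero]
        · simp
      · intro hh; exact absurd hθ₀ hh
    rw [heval a, heval b] at hev
    have hc : (∏ η ∈ Θ.erase θ₀, (θ₀ - η)) ≠ 0 := by
      apply Finset.prod_ne_zero_iff.mpr
      intro η hη
      exact sub_ne_zero.mpr fun hh => (Finset.mem_erase.mp hη).1 hh.symm
    exact mul_right_cancel₀ hc hev
  · intro h
    apply Polynomial.eq_of_infinite_eval_eq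
    apply Set.Infinite.mono _ Θ.finite_toSet.infinite_compl
    intro x hx
    have hxθ : ∀ θ ∈ Θ, x ≠ θ := fun θ hθ hxe => hx (by simpa [hxe] using hθ)
    simp only [Set.mem_setOf_eq]
    rw [key M Θ E hdecomp hsum hidem horth a x hxθ,
      key M Θ E hdecomp hsum hidem horth b x hxθ]
    congr 1
    exact Finset.sum_congr rfl fun θ hθ => by rw [h θ hθ]
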